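/- Fix y ∈ ℝⁿ, X ∈ ℝ^{n×p} and λ > 0, let ℓ ∈ {0,1,…,p}, and suppose β* is an optimal solution to (TL_{λ,ℓ}) with κ := ‖β*‖₀ < ℓ. Then β* is also an optimal solution to each of (TL_{λ,κ}), (TL_{λ,κ+1}), …, (TL_{λ,ℓ−1}), and β* is not an optimal solution to any of (TL_{λ,0}), (TL_{λ,1}), …, (TL_{λ,κ−1}). -/

import Mathlib

open Finset

/-- Absolute values of the entries of `β`, sorted in increasing order. -/
noncomputable def sortAbs {p : ℕ} (β : Fin p → ℝ) : Fin p → ℝ :=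
  fun i => |β (Tuple.sort (fun j => |β j|) i)|

/-- The trimmed Lasso penalty `T_k(β)`: sum of the `p - k` smallest `|β_i|`. -/
noncomputable def trimmedLasso {p : ℕ} (k : ℕ) (β : Fin p → ℝ) : ℝ :=
  ∑ i ∈ Finset.univ.filter (fun i : Fin p => (i : ℕ) < p - k), sortAbs β i

/-- `‖β‖₀`: the number of nonzero entries of `β`. -/
noncomputable def l0 {p : ℕ} (β : Fin p → ℝ) : ℕ :=
  (Finset.univ.filter (fun i => β i ≠ 0)).card

/-- The objective of the trimmed Lasso problem `(TL_{λ,k})`. -/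
noncomputable def tlObj {n p : ℕ} (y : Fin n → ℝ) (X : Matrix (Fin n) (Fin p) ℝ)
    (lam : ℝ) (k : ℕ) (β : Fin p → ℝ) : ℝ :=
  (1 / 2) * (∑ i, (y i - X.mulVec β i) ^ 2) + lam * trimmedLasso k β

lemma aux_le_zero {a b : ℝ} (hb : 0 ≤ b) (h : ∀ t : ℝ, 0 < t → t ≤ 1 → a ≤ t * b) : a ≤ 0 := by
  by_contra hc
  push_neg at hc
  have hb1 : (0:ℝ) < 2*b+1 := by linarith
  set t := min 1 (a / (2*b+1)) with ht
  have ht0 : 0 < t := lt_min one_pos (div_pos hc hb1)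
  have ht1 : t ≤ 1 := min_le_left _ _
  have := h t ht0 ht1
  have h2 : t * b ≤ (a / (2*b+1)) * b := by
    apply mul_le_mul_of_nonneg_right (min_le_right _ _) hb
  have h3 : (a / (2*b+1)) * b < a := by
    rw [div_mul_eq_mul_div, div_lt_iff₀ hb1]
    nlinarith
  linarith

lemma fin_strictMono_le {m p : ℕ} (f : Fin m → Fin p) (hf : StrictMono f) (k : Fin m) :
    (k : ℕ) ≤ (f k : ℕ) := by
  obtain ⟨n, hn⟩ := k
  induction n with
  | zero => exact Nat.zero_le _
  | succ n ih =>
    have h1 : n < m := Nat.lt_of_succ_lt hn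
    have h2 : (⟨n, h1⟩ : Fin m) < ⟨n+1, hn⟩ := by simp [Fin.lt_def]
    have h3 : (f ⟨n, h1⟩ : ℕ) < (f ⟨n+1, hn⟩ : ℕ) := hf h2
    have h4 := ih h1
    rw [Fin.val_mk] at h4 ⊢
    omega

lemma filter_lt_card {p m : ℕ} (hm : m ≤ p) :
    (Finset.univ.filter (fun i : Fin p => (i : ℕ) < m)).card = m := by
  have : (Finset.univ.filter (fun i : Fin p => (i : ℕ) < m))
      = Finset.map (Fin.castLEEmb hm) Finset.univ := by
    ext i
    simp only [mem_filter, mem_univ, true_and, Finset.mem_map]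
    constructor
    · intro hi
      exact ⟨⟨(i:ℕ), hi⟩, by simp [Fin.castLEEmb, Fin.castLE]⟩
    · rintro ⟨k, rfl⟩
      simpa [Fin.castLEEmb, Fin.castLE] using k.2
  rw [this, Finset.card_map, Finset.card_univ, Fintype.card_fin]

lemma sum_prefix_le {p m : ℕ} (hm : m ≤ p) (g : Fin p → ℝ) (hg : Monotone g)
    (T : Finset (Fin p)) (hT : T.card = m) :
    ∑ i ∈ Finset.univ.filter (fun i : Fin p => (i : ℕ) < m), g i ≤ ∑ i ∈ T, g i := by
  have e := T.orderEmbOfFin hT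
  have hTim : T = Finset.image (T.orderEmbOfFin hT) Finset.univ := by
    ext s
    simp only [Finset.mem_image, mem_univ, true_and]
    constructor
    · intro hs
      have : s ∈ Set.range (T.orderEmbOfFin hT) := by
        rw [Finset.range_orderEmbOfFin]; exact hs
      obtain ⟨k, hk⟩ := this
      exact ⟨k, hk⟩
    · rintro ⟨k, rfl⟩
      exact Finset.orderEmbOfFin_mem T hT k
  have hfil : (Finset.univ.filter (fun i : Fin p => (i : ℕ) < m))
      = Finset.map (Fin.castLEEmb hm) Finset.univ := by
    ext i
    simp only [mem_filter, mem_univ, true_and, Finset.mem_map]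
    constructor
    · intro hi
      exact ⟨⟨(i:ℕ), hi⟩, by simp [Fin.castLEEmb, Fin.castLE]⟩
    · rintro ⟨k, rfl⟩
      simpa [Fin.castLEEmb, Fin.castLE] using k.2
  rw [hfil, Finset.sum_map, hTim, Finset.sum_image (fun a _ b _ h =>
    (T.orderEmbOfFin hT).injective h)]
  apply Finset.sum_le_sum
  intro k _
  apply hg
  rw [Fin.le_def]
  have := fin_strictMono_le _ (T.orderEmbOfFin hT).strictMono k
  simpa [Fin.castLEEmb, Fin.castLE] using this

lemma sortAbs_monotone {p : ℕ} (β : Fin p → ℝ) : Monotone (sortAbs β) :=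
  Tuple.monotone_sort (fun j => |β j|)

lemma sortAbs_nonneg {p : ℕ} (β : Fin p → ℝ) (i : Fin p) : 0 ≤ sortAbs β i := abs_nonneg _

lemma card_sortAbs_ne {p : ℕ} (β : Fin p → ℝ) :
    (Finset.univ.filter (fun i => sortAbs β i ≠ 0)).card = l0 β := by
  have h1 : ∀ i, (sortAbs β i ≠ 0) ↔ β (Tuple.sort (fun j => |β j|) i) ≠ 0 := by
    intro i; rw [sortAbs]; simp [abs_ne_zero]
  unfold l0
  rw [← Fintype.card_subtype, ← Fintype.card_subtype]
  exact Fintype.card_congr (Equiv.subtypeEquiv (Tuple.sort (fun j => |β j|)) h1)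

lemma trimmedLasso_le_sum {p : ℕ} (k : ℕ) (β : Fin p → ℝ) (T : Finset (Fin p))
    (hT : T.card = p - k) :
    trimmedLasso k β ≤ ∑ s ∈ T, |β s| := by
  set σ := Tuple.sort (fun j => |β j|) with hσ
  have h1 : ∀ s : Fin p, |β s| = sortAbs β (σ.symm s) := by
    intro s; rw [sortAbs]; simp [← hσ]
  calc trimmedLasso k β ≤ ∑ i ∈ Finset.image σ.symm T, sortAbs β i := by
        apply sum_prefix_le (Nat.sub_le p k) (sortAbs β) (sortAbs_monotone β)
        rw [Finset.card_image_of_injective _ σ.symm.injective, hT]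
      _ = ∑ s ∈ T, |β s| := by
        rw [Finset.sum_image (fun a _ b _ h => σ.symm.injective h)]
        exact Finset.sum_congr rfl (fun s _ => (h1 s).symm)

lemma sortAbs_eq_zero {p : ℕ} (β : Fin p → ℝ) (i : Fin p) (hi : (i : ℕ) < p - l0 β) :
    sortAbs β i = 0 := by
  by_contra h
  have hpos : ∀ i' : Fin p, i ≤ i' → sortAbs β i' ≠ 0 := by
    intro i' hii'
    have := sortAbs_monotone β hii'
    have h0 := sortAbs_nonneg β i
    intro hz
    rw [hz] at this
    exact h (le_antisymm this h0)
  have hsub : Finset.Ici i ⊆ Finset.univ.filter (fun i' => sortAbs β i' ≠ 0) := by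
    intro i' hi'
    simp only [mem_filter, mem_univ, true_and]
    exact hpos i' (Finset.mem_Ici.mp hi')
  have := Finset.card_le_card hsub
  rw [Fin.card_Ici, card_sortAbs_ne] at this
  have := i.2
  omega

lemma trimmedLasso_eq_zero {p : ℕ} (k : ℕ) (β : Fin p → ℝ) (hk : l0 β ≤ k) :
    trimmedLasso k β = 0 := by
  unfold trimmedLasso
  apply Finset.sum_eq_zero
  intro i hi
  simp only [mem_filter, mem_univ, true_and] at hi
  exact sortAbs_eq_zero β i (by omega)

lemma trimmedLasso_nonneg {p : ℕ} (k : ℕ) (β : Fin p → ℝ) : 0 ≤ trimmedLasso k β :=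
  Finset.sum_nonneg (fun i _ => sortAbs_nonneg β i)

lemma trimmedLasso_anti {p : ℕ} {j k : ℕ} (h : j ≤ k) (β : Fin p → ℝ) :
    trimmedLasso k β ≤ trimmedLasso j β := by
  apply Finset.sum_le_sum_of_subset_of_nonneg
  · intro i hi
    simp only [mem_filter, mem_univ, true_and] at hi ⊢
    omega
  · intro i _ _
    exact sortAbs_nonneg β i

/-- Lemma 4.1(c): if `β*` is optimal for `(TL_{λ,ℓ})` and
`κ := ‖β*‖₀ < ℓ`, then `β*` is also optimal for each of `(TL_{λ,κ})`, …,
`(TL_{λ,ℓ-1})`, and `β*` is not optimal for any of `(TL_{λ,0})`, …,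
`(TL_{λ,κ-1})`. -/
theorem tl_optimal_below_sparsity {n p : ℕ} (y : Fin n → ℝ)
    (X : Matrix (Fin n) (Fin p) ℝ) (lam : ℝ) (hlam : 0 < lam)
    (ℓ : ℕ) (hℓ : ℓ ≤ p) (βs : Fin p → ℝ)
    (hopt : ∀ β, tlObj y X lam ℓ βs ≤ tlObj y X lam ℓ β)
    (hκ : l0 βs < ℓ) :
    (∀ j : ℕ, l0 βs ≤ j → j < ℓ →
      ∀ β, tlObj y X lam j βs ≤ tlObj y X lam j β) ∧
    (∀ j : ℕ, j < l0 βs →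
      ¬ (∀ β, tlObj y X lam j βs ≤ tlObj y X lam j β)) := by
  constructor
  · intro j hj1 hj2 β
    have h0 : trimmedLasso j βs = 0 := trimmedLasso_eq_zero j βs hj1
    have h0' : trimmedLasso ℓ βs = 0 := trimmedLasso_eq_zero ℓ βs (le_of_lt hκ)
    have h1 := hopt β
    have h2 : trimmedLasso ℓ β ≤ trimmedLasso j β := trimmedLasso_anti (le_of_lt hj2) β
    unfold tlObj at h1 ⊢
    rw [h0] at *
    rw [h0'] at h1
    have := mul_le_mul_of_nonneg_left h2 hlam.le
    linarith
  · intro j hj hcon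
    have hκp : l0 βs ≤ p := le_trans (Finset.card_filter_le _ _) (by simp)
    have hjp : j < p := lt_of_lt_of_le hj hκp
    set σ := Tuple.sort (fun i => |βs i|) with hσ
    have hidx : p - j - 1 < p := by omega
    set i1 : Fin p := σ ⟨p - j - 1, hidx⟩ with hi1
    -- the sorted value at position p - j - 1 is nonzero
    have hsne : sortAbs βs ⟨p - j - 1, hidx⟩ ≠ 0 := by
      intro hz
      have hsub : Finset.univ.filter (fun i => sortAbs βs i ≠ 0)
          ⊆ Finset.univ.filter (fun i : Fin p => ¬ ((i : ℕ) < p - j)) := by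
        intro i hi
        simp only [mem_filter, mem_univ, true_and] at hi ⊢
        intro hlt
        apply hi
        have hle : i ≤ (⟨p - j - 1, hidx⟩ : Fin p) := by
          rw [Fin.le_def]; simp; omega
        have hmono := sortAbs_monotone βs hle
        rw [hz] at hmono
        exact le_antisymm hmono (sortAbs_nonneg βs i)
      have hc := Finset.card_le_card hsub
      rw [card_sortAbs_ne] at hc
      have hsplit := Finset.card_filter_add_card_filter_not
        (s := (Finset.univ : Finset (Fin p))) (p := fun i : Fin p => (i : ℕ) < p - j)
      rw [filter_lt_card (Nat.sub_le p j), Finset.card_univ, Fintype.card_fin] at hsplit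
      omega
    have hv : βs i1 ≠ 0 := by
      intro hz
      apply hsne
      rw [sortAbs, ← hσ, ← hi1, hz, abs_zero]
    have ha : 0 < |βs i1| := abs_pos.mpr hv
    obtain ⟨v, hvdef⟩ : ∃ v, v = βs i1 := ⟨_, rfl⟩
    have hv' : v ≠ 0 := hvdef ▸ hv
    obtain ⟨g, hgdef⟩ : ∃ g, g = ∑ i, (y i - X.mulVec βs i) * (X i i1 * v) := ⟨_, rfl⟩
    obtain ⟨h2, hh2def⟩ : ∃ h2, h2 = ∑ i, (X i i1 * v) ^ 2 := ⟨_, rfl⟩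
    have hh2nn : 0 ≤ h2 := hh2def ▸ Finset.sum_nonneg (fun i _ => sq_nonneg _)
    have hexp : ∀ t : ℝ, ∑ i, (y i - X.mulVec (βs + t • (Pi.single i1 v : Fin p → ℝ)) i) ^ 2
        = (∑ i, (y i - X.mulVec βs i) ^ 2) - 2 * t * g + t ^ 2 * h2 := by
      intro t
      have hmv : X.mulVec (βs + t • (Pi.single i1 v : Fin p → ℝ))
          = fun i => X.mulVec βs i + t * (X i i1 * v) := by
        rw [Matrix.mulVec_add, Matrix.mulVec_smul, Matrix.mulVec_single]
        ext i
        simp [smul_eq_mul]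
        left; ring
      rw [hmv, hgdef, hh2def]
      have hterm : ∀ i, (y i - (X.mulVec βs i + t * (X i i1 * v))) ^ 2
          = (y i - X.mulVec βs i) ^ 2 - (2 * t) * ((y i - X.mulVec βs i) * (X i i1 * v))
            + t ^ 2 * (X i i1 * v) ^ 2 := by
        intro i; ring
      rw [Finset.sum_congr rfl (fun i _ => hterm i), Finset.sum_add_distrib,
        Finset.sum_sub_distrib, ← Finset.mul_sum, ← Finset.mul_sum]
    -- growing the entry: g ≤ 0
    have hg0 : g ≤ 0 := by
      have key : ∀ t : ℝ, 0 < t → t ≤ 1 → 2 * g ≤ t * h2 := by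
        intro t ht0 _
        have hopt' := hopt (βs + t • (Pi.single i1 v : Fin p → ℝ))
        have hl0 : l0 (βs + t • (Pi.single i1 v : Fin p → ℝ)) = l0 βs := by
          unfold l0
          congr 1
          ext i
          simp only [mem_filter, mem_univ, true_and, Pi.add_apply, Pi.smul_apply, smul_eq_mul]
          by_cases hii : i = i1
          · subst hii
            rw [Pi.single_eq_same, ← hvdef]
            have hne : v + t * v = (1 + t) * v := by ring
            rw [hne]
            exact iff_of_true (mul_ne_zero (by linarith) hv') hv'
          · rw [Pi.single_eq_of_ne hii]
            simp
        have hTt : trimmedLasso ℓ (βs + t • (Pi.single i1 v : Fin p → ℝ)) = 0 :=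
          trimmedLasso_eq_zero _ _ (by rw [hl0]; exact le_of_lt hκ)
        have hTs : trimmedLasso ℓ βs = 0 := trimmedLasso_eq_zero _ _ (le_of_lt hκ)
        unfold tlObj at hopt'
        rw [hTt, hTs, hexp t] at hopt'
        have hstep : 0 ≤ t * (t * h2 - 2 * g) := by nlinarith [hopt']
        have := (mul_nonneg_iff_of_pos_left ht0).mp hstep
        linarith
      linarith [aux_le_zero hh2nn key]
    -- the selection set S
    set S := Finset.image σ (Finset.univ.filter (fun i : Fin p => (i : ℕ) < p - j)) with hS
    have hScard : S.card = p - j := by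
      rw [hS, Finset.card_image_of_injective _ σ.injective, filter_lt_card (Nat.sub_le p j)]
    have hi1S : i1 ∈ S := by
      rw [hS, hi1]
      apply Finset.mem_image_of_mem
      simp only [mem_filter, mem_univ, true_and]
      omega
    have hTjS : trimmedLasso j βs = ∑ s ∈ S, |βs s| := by
      rw [hS, Finset.sum_image (fun a _ b _ h => σ.injective h)]
      unfold trimmedLasso sortAbs
      rw [← hσ]
    -- shrinking the entry
    have hkey : ∀ t : ℝ, 0 < t → t ≤ 1 → 2 * (lam * |βs i1| - g) ≤ t * h2 := by
      intro ε hε0 hε1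
      have hcon' := hcon (βs + (-ε) • (Pi.single i1 v : Fin p → ℝ))
      have hpert : ∀ s : Fin p, s ≠ i1 → (βs + (-ε) • (Pi.single i1 v : Fin p → ℝ)) s = βs s := by
        intro s hs
        simp [Pi.single_eq_of_ne hs]
      have hTb : trimmedLasso j (βs + (-ε) • (Pi.single i1 v : Fin p → ℝ))
          ≤ ∑ s ∈ S, |βs s| - ε * |βs i1| := by
        refine le_trans (trimmedLasso_le_sum j _ S hScard) ?_
        rw [← Finset.add_sum_erase S _ hi1S, ← Finset.add_sum_erase S (fun s => |βs s|) hi1S]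
        have h1 : (βs + (-ε) • (Pi.single i1 v : Fin p → ℝ)) i1 = (1 - ε) * βs i1 := by
          simp only [Pi.add_apply, Pi.smul_apply, Pi.single_eq_same, smul_eq_mul, ← hvdef]
          ring
        have h3 : ∑ s ∈ S.erase i1, |(βs + (-ε) • (Pi.single i1 v : Fin p → ℝ)) s|
            = ∑ s ∈ S.erase i1, |βs s| :=
          Finset.sum_congr rfl (fun s hs => by rw [hpert s (Finset.ne_of_mem_erase hs)])
        rw [h1, h3, abs_mul, abs_of_nonneg (by linarith : (0:ℝ) ≤ 1 - ε)]
        linarith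
      unfold tlObj at hcon'
      rw [hexp (-ε), hTjS] at hcon'
      have hc2 : lam * trimmedLasso j (βs + (-ε) • (Pi.single i1 v : Fin p → ℝ))
          ≤ lam * (∑ s ∈ S, |βs s| - ε * |βs i1|) :=
        mul_le_mul_of_nonneg_left hTb hlam.le
      have hstep : 0 ≤ ε * (ε * h2 + 2 * g - 2 * (lam * |βs i1|)) := by nlinarith [hcon', hc2]
      have := (mul_nonneg_iff_of_pos_left hε0).mp hstep
      linarith
    have hfin := aux_le_zero hh2nn hkey
    have hpos : 0 < lam * |βs i1| := mul_pos hlam ha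
    linarith
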